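/- Let t > 0 and τ > 0, and let Δy ≥ 0, Δa ≥ 0, Δc ∈ ℝ. Set D = Δy + Δc·τ(1 − e^{−t/τ}) + Δa·(τ² − τ²e^{−t/τ} − τt) and N = Δc·e^{−t/τ} + Δa·(τe^{−t/τ} − τ). If D > 0, then N/D ≤ 1/t. -/
import Mathlib

theorem stmt11 (τ t Δy Δa Δc : ℝ) (hτ : 0 < τ) (ht : 0 < t)
    (hΔy : 0 ≤ Δy) (hΔa : 0 ≤ Δa)
    (hD : 0 < Δy + Δc * (τ * (1 - Real.exp (-t / τ)))
        + Δa * (τ ^ 2 - τ ^ 2 * Real.exp (-t / τ) - τ * t)) :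
    (Δc * Real.exp (-t / τ) + Δa * (τ * Real.exp (-t / τ) - τ)) /
      (Δy + Δc * (τ * (1 - Real.exp (-t / τ)))
        + Δa * (τ ^ 2 - τ ^ 2 * Real.exp (-t / τ) - τ * t)) ≤ 1 / t := by
  set E := Real.exp (-t / τ) with hE
  have hE0 : 0 < E := Real.exp_pos _
  have hkey : t * E ≤ τ * (1 - E) := by
    have h1 : t / τ + 1 ≤ Real.exp (t / τ) := Real.add_one_le_exp _
    have h2 : Real.exp (t / τ) * E = 1 := by
      rw [hE, ← Real.exp_add]
      rw [show t / τ + -t / τ = 0 by ring, Real.exp_zero]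
    have hτE : 0 < τ * E := mul_pos hτ hE0
    have h3 : (t / τ + 1) * (τ * E) ≤ Real.exp (t / τ) * (τ * E) :=
      mul_le_mul_of_nonneg_right h1 (le_of_lt hτE)
    have h4 : (t / τ) * τ = t := div_mul_cancel₀ t (ne_of_gt hτ)
    nlinarith [h3, h2]
  rw [div_le_div_iff₀ hD ht]
  rcases le_or_gt 0 (Δc + Δa * τ) with hK | hK
  · nlinarith [mul_nonneg hK (by linarith : (0:ℝ) ≤ τ * (1 - E) - t * E)]
  · have hN : Δc * E + Δa * (τ * E - τ) ≤ 0 := by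
      nlinarith [mul_neg_of_neg_of_pos hK hE0, mul_nonneg hΔa hτ.le]
    nlinarith [mul_nonpos_of_nonpos_of_nonneg hN ht.le]
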